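/- (Pointwise POD projection error) For every 0 ≤ l < d_p and every 1 ≤ j ≤ M, ‖u_j − P_l u_j‖² = M Σ_{k=l+1}^{d_p} λ_k (v_k^j)², and consequently ‖u_j − P_l u_j‖ ≤ √M √λ_{l+1}. -/

import Mathlib

open scoped RealInnerProductSpace
open Finset

/-- Pointwise POD projection error:
`‖u j − P l (u j)‖² = M Σ_{l < k ≤ dp} λ k (v k j)²` and `‖u j − P l (u j)‖ ≤ √M √(λ (l+1))`. -/
theorem pod_pointwise_projection_error
    {X : Type*} [NormedAddCommGroup X] [InnerProductSpace ℝ X]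
    (M : ℕ) (hM : 1 ≤ M) (u : Fin M → X)
    (K : Matrix (Fin M) (Fin M) ℝ)
    (hK : ∀ i j, K i j = (1 / (M : ℝ)) * ⟪u i, u j⟫)
    (v : Fin M → Fin M → ℝ)
    (hvON : ∀ k l, ∑ j, v k j * v l j = if k = l then (1 : ℝ) else 0)
    (lam : Fin M → ℝ)
    (heig : ∀ k, K.mulVec (v k) = lam k • v k)
    (hmono : ∀ k l : Fin M, k ≤ l → lam l ≤ lam k)
    (hnonneg : ∀ k, 0 ≤ lam k)
    (dp : ℕ) (hdpM : dp ≤ M)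
    (hpos : ∀ k : Fin M, (k : ℕ) < dp → 0 < lam k)
    (hzero : ∀ k : Fin M, dp ≤ (k : ℕ) → lam k = 0)
    (ψ : Fin M → X)
    (hψ : ∀ k : Fin M, ψ k =
      (Real.sqrt M * Real.sqrt (lam k))⁻¹ • ∑ j, v k j • u j)
    (l : ℕ) (hl : l < dp) (P : X → X)
    (hPmem : ∀ x, P x ∈ Submodule.span ℝ (ψ '' {k : Fin M | (k : ℕ) < l}))
    (hPorth : ∀ x, ∀ w ∈ Submodule.span ℝ (ψ '' {k : Fin M | (k : ℕ) < l}),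
      ⟪x - P x, w⟫ = 0) :
    ∀ j : Fin M,
      ‖u j - P (u j)‖ ^ 2 =
        (M : ℝ) * ∑ k ∈ univ.filter (fun k : Fin M => l ≤ (k : ℕ) ∧ (k : ℕ) < dp),
          lam k * (v k j) ^ 2 ∧
      ‖u j - P (u j)‖ ≤ Real.sqrt M * Real.sqrt (lam ⟨l, lt_of_lt_of_le hl hdpM⟩) := by
  intro j
  have hM0 : (0:ℝ) < M := by exact_mod_cast hM
  set S : Fin M → X := fun k => ∑ i, v k i • u i with hS
  -- Gram matrix of the S k
  have hinner : ∀ i i' : Fin M, ⟪u i, u i'⟫ = (M:ℝ) * K i i' := by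
    intro i i'; rw [hK]; field_simp
  have hGram : ∀ k m : Fin M, ⟪S k, S m⟫ = if k = m then (M:ℝ) * lam m else 0 := by
    intro k m
    have step1 : ⟪S k, S m⟫ = ∑ i, ∑ i', v k i * (v m i' * ((M:ℝ) * K i i')) := by
      simp only [hS, sum_inner, inner_sum, real_inner_smul_left, real_inner_smul_right,
        hinner]
      rw [Finset.sum_comm]
      exact Finset.sum_congr rfl fun i _ => Finset.sum_congr rfl fun i' _ => by ring
    rw [step1]
    have step2 : ∀ i : Fin M, ∑ i', v k i * (v m i' * ((M:ℝ) * K i i'))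
        = (M:ℝ) * (v k i * (K.mulVec (v m)) i) := by
      intro i
      rw [Matrix.mulVec, dotProduct, Finset.mul_sum, Finset.mul_sum]
      exact Finset.sum_congr rfl fun i' _ => by ring
    rw [Finset.sum_congr rfl fun i _ => step2 i, ← Finset.mul_sum]
    have step3 : ∀ i : Fin M, v k i * (K.mulVec (v m)) i = lam m * (v k i * v m i) := by
      intro i; rw [heig m]; simp [smul_eq_mul]; ring
    rw [Finset.sum_congr rfl fun i _ => step3 i, ← Finset.mul_sum, hvON k m]
    split_ifs <;> ring
  -- S k vanishes for k ≥ dp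
  have hSzero : ∀ k : Fin M, dp ≤ (k:ℕ) → S k = 0 := by
    intro k hk
    have h := hGram k k
    rw [if_pos rfl, hzero k hk, mul_zero] at h
    exact inner_self_eq_zero.mp h
  -- S k is a multiple of ψ k for k < dp
  have hSψ : ∀ k : Fin M, (k:ℕ) < dp →
      S k = (Real.sqrt M * Real.sqrt (lam k)) • ψ k := by
    intro k hk
    have hne : (Real.sqrt M * Real.sqrt (lam k)) ≠ 0 := by
      have := hpos k hk; positivity
    rw [hψ k, smul_smul, mul_inv_cancel₀ hne, one_smul]
  -- completeness of the columns of v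
  have hVtV : ∀ a b : Fin M, ∑ k, v k a * v k b = if a = b then (1:ℝ) else 0 := by
    intro a b
    have h1 : (Matrix.of v) * (Matrix.of v).transpose = 1 := by
      ext k m
      simp [Matrix.mul_apply, Matrix.one_apply, Matrix.transpose_apply, hvON k m]
    have h2 : (Matrix.of v).transpose * (Matrix.of v) = 1 := mul_eq_one_comm.mp h1
    have h3 := congrFun (congrFun h2 a) b
    simpa [Matrix.mul_apply, Matrix.one_apply, Matrix.transpose_apply] using h3
  -- decomposition of u j
  have hdecomp : u j = ∑ k, v k j • S k := by
    have h1 : ∑ k, v k j • S k = ∑ i, (∑ k, v k j * v k i) • u i := by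
      simp only [hS, Finset.smul_sum]
      rw [Finset.sum_comm]
      exact Finset.sum_congr rfl fun i _ => by
        rw [Finset.sum_smul]
        exact Finset.sum_congr rfl fun k _ => (smul_smul _ _ _)
    rw [h1]
    simp [hVtV, ite_smul]
  set G : Finset (Fin M) := univ.filter (fun k : Fin M => (k:ℕ) < l) with hG
  set F : Finset (Fin M) := univ.filter (fun k : Fin M => l ≤ (k:ℕ) ∧ (k:ℕ) < dp) with hF
  set s0 : X := ∑ k ∈ G, v k j • S k with hs0
  set t : X := ∑ k ∈ F, v k j • S k with ht
  have hsplit : u j = s0 + t := by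
    rw [hdecomp, ← Finset.sum_filter_add_sum_filter_not univ (fun k : Fin M => (k:ℕ) < l)]
    congr 1
    refine (Finset.sum_subset ?_ ?_).symm
    · intro k hk
      simp only [hF, Finset.mem_filter, Finset.mem_univ, true_and] at hk
      simp [hk.1]
    · intro k hk hk'
      simp only [Finset.mem_filter, Finset.mem_univ, true_and, not_lt] at hk
      simp only [hF, Finset.mem_filter, Finset.mem_univ, true_and, not_and, not_lt] at hk'
      rw [hSzero k (hk' hk), smul_zero]
  have hs0mem : s0 ∈ Submodule.span ℝ (ψ '' {k : Fin M | (k : ℕ) < l}) := by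
    refine Submodule.sum_mem _ fun k hk => ?_
    simp only [hG, Finset.mem_filter, Finset.mem_univ, true_and] at hk
    rw [hSψ k (hk.trans hl), smul_smul]
    exact Submodule.smul_mem _ _ (Submodule.subset_span ⟨k, hk, rfl⟩)
  have htorth : ∀ w ∈ Submodule.span ℝ (ψ '' {k : Fin M | (k : ℕ) < l}), ⟪t, w⟫ = 0 := by
    intro w hw
    induction hw using Submodule.span_induction with
    | mem w hw =>
      obtain ⟨m, hm, rfl⟩ := hw
      simp only [Set.mem_setOf_eq] at hm
      have hmd : (m:ℕ) < dp := hm.trans hl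
      have : ψ m = (Real.sqrt M * Real.sqrt (lam m))⁻¹ • S m := hψ m
      rw [this, real_inner_smul_right, ht, sum_inner]
      have : ∀ k ∈ F, ⟪v k j • S k, S m⟫ = 0 := by
        intro k hk
        simp only [hF, Finset.mem_filter, Finset.mem_univ, true_and] at hk
        have hne : k ≠ m := by
          intro h; rw [h] at hk; omega
        rw [real_inner_smul_left, hGram, if_neg hne, mul_zero]
      rw [Finset.sum_congr rfl this, Finset.sum_const_zero, mul_zero]
    | zero => simp
    | add x y _ _ hx hy => rw [inner_add_right, hx, hy, add_zero]
    | smul c x _ hx => rw [real_inner_smul_right, hx, mul_zero]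
  have hPeq : P (u j) = s0 := by
    have hd : s0 - P (u j) ∈ Submodule.span ℝ (ψ '' {k : Fin M | (k : ℕ) < l}) :=
      Submodule.sub_mem _ hs0mem (hPmem (u j))
    have h1 := hPorth (u j) _ hd
    have h2 : ⟪u j - s0, s0 - P (u j)⟫ = 0 := by
      have he : u j - s0 = t := by rw [hsplit]; abel
      rw [he]; exact htorth _ hd
    have h3 : s0 - P (u j) = (u j - P (u j)) - (u j - s0) := by abel
    have h4 : ⟪s0 - P (u j), s0 - P (u j)⟫ = 0 := by
      nth_rewrite 1 [h3]
      rw [inner_sub_left, h1, h2, sub_zero]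
    have := inner_self_eq_zero.mp h4
    have := sub_eq_zero.mp this
    exact this.symm
  have hujP : u j - P (u j) = t := by rw [hPeq, hsplit]; abel
  -- norm squared of t
  have hnorm2 : ‖t‖ ^ 2 = (M:ℝ) * ∑ k ∈ F, lam k * (v k j) ^ 2 := by
    rw [← real_inner_self_eq_norm_sq]
    have step1 : ⟪t, t⟫ = ∑ k ∈ F, ∑ m ∈ F,
        v k j * (v m j * (if k = m then (M:ℝ) * lam m else 0)) := by
      rw [ht, sum_inner]
      simp [inner_sum, real_inner_smul_left, real_inner_smul_right, hGram]
    rw [step1]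
    have step2 : ∀ k ∈ F, ∑ m ∈ F, v k j * (v m j * (if k = m then (M:ℝ) * lam m else 0))
        = (M:ℝ) * (lam k * (v k j) ^ 2) := by
      intro k hk
      rw [Finset.sum_eq_single k]
      · rw [if_pos rfl]; ring
      · intro m _ hm
        rw [if_neg (Ne.symm hm), mul_zero, mul_zero]
      · intro h; exact absurd hk h
    rw [Finset.sum_congr rfl step2, ← Finset.mul_sum]
  refine ⟨by rw [hujP, hnorm2], ?_⟩
  -- the bound
  set lamL := lam ⟨l, lt_of_lt_of_le hl hdpM⟩ with hlamL
  have hsumsq : ∑ k, (v k j) ^ 2 = 1 := by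
    have := hVtV j j
    rw [if_pos rfl] at this
    rw [← this]
    exact Finset.sum_congr rfl fun k _ => (sq (v k j))
  have hb1 : ∑ k ∈ F, lam k * (v k j) ^ 2 ≤ lamL * ∑ k ∈ F, (v k j) ^ 2 := by
    rw [Finset.mul_sum]
    refine Finset.sum_le_sum fun k hk => ?_
    simp only [hF, Finset.mem_filter, Finset.mem_univ, true_and] at hk
    have hle : (⟨l, lt_of_lt_of_le hl hdpM⟩ : Fin M) ≤ k := hk.1
    exact mul_le_mul_of_nonneg_right (hmono _ _ hle) (sq_nonneg _)
  have hb2 : ∑ k ∈ F, (v k j) ^ 2 ≤ 1 := by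
    rw [← hsumsq]
    exact Finset.sum_le_sum_of_subset_of_nonneg (Finset.subset_univ _)
      (fun k _ _ => sq_nonneg _)
  have hlamL0 : 0 ≤ lamL := hnonneg _
  have hfin : ‖u j - P (u j)‖ ^ 2 ≤ (M:ℝ) * lamL := by
    rw [hujP, hnorm2]
    calc (M:ℝ) * ∑ k ∈ F, lam k * (v k j) ^ 2
        ≤ (M:ℝ) * (lamL * ∑ k ∈ F, (v k j) ^ 2) :=
          mul_le_mul_of_nonneg_left hb1 (le_of_lt hM0)
      _ ≤ (M:ℝ) * (lamL * 1) := by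
          refine mul_le_mul_of_nonneg_left ?_ (le_of_lt hM0)
          exact mul_le_mul_of_nonneg_left hb2 hlamL0
      _ = (M:ℝ) * lamL := by ring
  have h5 : ‖u j - P (u j)‖ ≤ Real.sqrt ((M:ℝ) * lamL) := by
    rw [← Real.sqrt_sq (norm_nonneg _)]
    exact Real.sqrt_le_sqrt hfin
  calc ‖u j - P (u j)‖ ≤ Real.sqrt ((M:ℝ) * lamL) := h5
    _ = Real.sqrt M * Real.sqrt lamL := Real.sqrt_mul (le_of_lt hM0) _
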